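/- arXiv:2504.15749 — 2 statements merged into one kernel-verified Lean document; each statement's English description precedes it below -/
import Mathlib

section
/- If f, g : [0,∞) → [0,∞) satisfy f(s) ≤ C⟨s⟩^{-3/2} and g(s) ≤ C⟨s⟩^{-3/2}, then their convolution satisfies ∫₀^t f(t-s) g(s) ds ≤ C' ⟨t⟩^{-3/2} for all t ≥ 0, for some constant C' depending only on C. -/
open MeasureTheory intervalIntegral

noncomputable def hh (s : ℝ) : ℝ := (1 + s ^ 2) ^ (-(3 : ℝ) / 4)

lemma hh_pos_base (s : ℝ) : (0:ℝ) < 1 + s ^ 2 := by positivity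

lemma hh_nonneg (s : ℝ) : 0 ≤ hh s := Real.rpow_nonneg (hh_pos_base s).le _

lemma hh_le_one (s : ℝ) : hh s ≤ 1 :=
  Real.rpow_le_one_of_one_le_of_nonpos (by nlinarith [sq_nonneg s]) (by norm_num)

lemma hh_cont : Continuous hh := by
  apply Continuous.rpow_const
  · continuity
  · intro x; left; exact (hh_pos_base x).ne'

lemma hh_intble (a b : ℝ) : IntervalIntegrable hh volume a b :=
  hh_cont.intervalIntegrable a b

lemma hh_anti {s u : ℝ} (hs : 0 ≤ s) (hsu : s ≤ u) : hh u ≤ hh s :=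
  Real.rpow_le_rpow_of_nonpos (hh_pos_base s) (by nlinarith) (by norm_num)

lemma hh_int_le {T : ℝ} (hT : 0 ≤ T) : (∫ s in (0:ℝ)..T, hh s) ≤ 3 := by
  rcases le_or_gt T 1 with h1 | h1
  · calc (∫ s in (0:ℝ)..T, hh s) ≤ ∫ _ in (0:ℝ)..T, (1:ℝ) :=
          integral_mono_on hT (hh_intble 0 T) (intervalIntegrable_const)
            (fun x _ => hh_le_one x)
      _ = T := by simp
      _ ≤ 3 := by linarith
  · have hsplit : (∫ s in (0:ℝ)..1, hh s) + (∫ s in (1:ℝ)..T, hh s)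
        = ∫ s in (0:ℝ)..T, hh s :=
      integral_add_adjacent_intervals (hh_intble 0 1) (hh_intble 1 T)
    have h01 : (∫ s in (0:ℝ)..1, hh s) ≤ 1 := by
      calc (∫ s in (0:ℝ)..1, hh s) ≤ ∫ _ in (0:ℝ)..1, (1:ℝ) :=
            integral_mono_on zero_le_one (hh_intble 0 1) intervalIntegrable_const
              (fun x _ => hh_le_one x)
        _ = 1 := by simp
    have h0T : (0:ℝ) ∉ Set.uIcc (1:ℝ) T := by
      rw [Set.uIcc_of_le h1.le]
      intro h
      exact absurd h.1 (by norm_num)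
    have h1T : (∫ s in (1:ℝ)..T, hh s) ≤ 2 := by
      have hmono : (∫ s in (1:ℝ)..T, hh s) ≤ ∫ s in (1:ℝ)..T, s ^ (-(3:ℝ)/2) := by
        apply integral_mono_on h1.le (hh_intble 1 T)
          (intervalIntegrable_rpow (Or.inr h0T))
        intro x hx
        have hx1 : (1:ℝ) ≤ x := hx.1
        have hx0 : (0:ℝ) < x := by linarith
        have : hh x ≤ (x ^ 2) ^ (-(3:ℝ)/4) :=
          Real.rpow_le_rpow_of_nonpos (by positivity) (by linarith) (by norm_num)
        calc hh x ≤ (x ^ 2) ^ (-(3:ℝ)/4) := this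
          _ = x ^ (-(3:ℝ)/2) := by
              rw [← Real.rpow_natCast x 2, ← Real.rpow_mul hx0.le]
              norm_num
      have hval : (∫ s in (1:ℝ)..T, s ^ (-(3:ℝ)/2))
          = (T ^ (-(3:ℝ)/2 + 1) - 1 ^ (-(3:ℝ)/2 + 1)) / (-(3:ℝ)/2 + 1) := by
        apply integral_rpow
        right
        exact ⟨by norm_num, h0T⟩
      have hTpow : (0:ℝ) ≤ T ^ (-(3:ℝ)/2 + 1) := Real.rpow_nonneg (by linarith) _
      rw [Real.one_rpow] at hval
      have h2 : (∫ s in (1:ℝ)..T, s ^ (-(3:ℝ)/2)) ≤ 2 := by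
        rw [hval]; rw [show (T ^ (-(3:ℝ)/2 + 1) - 1) / (-(3:ℝ)/2 + 1)
          = 2 - 2 * T ^ (-(3:ℝ)/2 + 1) by ring]; linarith
      linarith
    linarith

lemma hh_half_le {t : ℝ} (ht : 0 ≤ t) : hh (t / 2) ≤ 4 * (1 + t ^ 2) ^ (-(3:ℝ)/4) := by
  have h1 : (1 + t ^ 2) / 4 ≤ 1 + (t / 2) ^ 2 := by nlinarith
  have h2 : hh (t / 2) ≤ ((1 + t ^ 2) / 4) ^ (-(3:ℝ)/4) :=
    Real.rpow_le_rpow_of_nonpos (by positivity) h1 (by norm_num)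
  have h3 : ((1 + t ^ 2) / 4) ^ (-(3:ℝ)/4)
      = (1 + t ^ 2) ^ (-(3:ℝ)/4) / (4:ℝ) ^ (-(3:ℝ)/4) := by
    rw [Real.div_rpow (hh_pos_base t).le (by norm_num)]
  have h4 : (4:ℝ) ^ ((3:ℝ)/4) ≤ 4 := by
    calc (4:ℝ) ^ ((3:ℝ)/4) ≤ (4:ℝ) ^ (1:ℝ) :=
          Real.rpow_le_rpow_of_exponent_le (by norm_num) (by norm_num)
      _ = 4 := Real.rpow_one 4
  have h5 : (1 + t ^ 2) ^ (-(3:ℝ)/4) / (4:ℝ) ^ (-(3:ℝ)/4)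
      = (1 + t ^ 2) ^ (-(3:ℝ)/4) * (4:ℝ) ^ ((3:ℝ)/4) := by
    rw [div_eq_mul_inv, ← Real.rpow_neg (by norm_num : (0:ℝ) ≤ 4)]
    norm_num
  have h6 : (0:ℝ) ≤ (1 + t ^ 2) ^ (-(3:ℝ)/4) := Real.rpow_nonneg (hh_pos_base t).le _
  calc hh (t / 2) ≤ (1 + t ^ 2) ^ (-(3:ℝ)/4) * (4:ℝ) ^ ((3:ℝ)/4) := by
        rw [← h5, ← h3]; exact h2
    _ ≤ (1 + t ^ 2) ^ (-(3:ℝ)/4) * 4 := by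
        exact mul_le_mul_of_nonneg_left h4 h6
    _ = 4 * (1 + t ^ 2) ^ (-(3:ℝ)/4) := by ring

lemma conv_intble (t a b : ℝ) :
    IntervalIntegrable (fun s => hh (t - s) * hh s) volume a b := by
  apply Continuous.intervalIntegrable
  exact (hh_cont.comp (continuous_const.sub continuous_id)).mul hh_cont

lemma key_bound {t : ℝ} (ht : 0 ≤ t) :
    (∫ s in (0:ℝ)..t, hh (t - s) * hh s) ≤ 24 * (1 + t ^ 2) ^ (-(3:ℝ)/4) := by
  set P := (1 + t ^ 2) ^ (-(3:ℝ)/4) with hP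
  have hP0 : 0 ≤ P := Real.rpow_nonneg (hh_pos_base t).le _
  have ht2 : (0:ℝ) ≤ t / 2 := by linarith
  have ht2t : t / 2 ≤ t := by linarith
  have hsplit : (∫ s in (0:ℝ)..t/2, hh (t - s) * hh s)
      + (∫ s in (t/2)..t, hh (t - s) * hh s)
      = ∫ s in (0:ℝ)..t, hh (t - s) * hh s :=
    integral_add_adjacent_intervals (conv_intble t 0 (t/2)) (conv_intble t (t/2) t)
  -- first piece
  have hfirst : (∫ s in (0:ℝ)..t/2, hh (t - s) * hh s) ≤ 12 * P := by
    have hmono : (∫ s in (0:ℝ)..t/2, hh (t - s) * hh s)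
        ≤ ∫ s in (0:ℝ)..t/2, (4 * P) * hh s := by
      apply integral_mono_on ht2 (conv_intble t 0 (t/2))
        ((continuous_const.mul hh_cont).intervalIntegrable _ _)
      intro x hx
      have h1 : hh (t - x) ≤ hh (t / 2) := hh_anti ht2 (by linarith [hx.2])
      have h2 : hh (t - x) ≤ 4 * P := h1.trans (hh_half_le ht)
      exact mul_le_mul_of_nonneg_right h2 (hh_nonneg x)
    have heq : (∫ s in (0:ℝ)..t/2, (4 * P) * hh s) = (4 * P) * ∫ s in (0:ℝ)..t/2, hh s := by
      exact integral_const_mul _ _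
    have hint : (∫ s in (0:ℝ)..t/2, hh s) ≤ 3 := hh_int_le ht2
    calc (∫ s in (0:ℝ)..t/2, hh (t - s) * hh s) ≤ (4 * P) * ∫ s in (0:ℝ)..t/2, hh s := by
          rw [← heq]; exact hmono
      _ ≤ (4 * P) * 3 := mul_le_mul_of_nonneg_left hint (by positivity)
      _ = 12 * P := by ring
  -- second piece
  have hsecond : (∫ s in (t/2)..t, hh (t - s) * hh s) ≤ 12 * P := by
    have hmono : (∫ s in (t/2)..t, hh (t - s) * hh s)
        ≤ ∫ s in (t/2)..t, hh (t - s) * (4 * P) := by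
      apply integral_mono_on ht2t (conv_intble t (t/2) t)
        (((hh_cont.comp (continuous_const.sub continuous_id)).mul continuous_const).intervalIntegrable _ _)
      intro x hx
      have h1 : hh x ≤ hh (t / 2) := hh_anti ht2 hx.1
      have h2 : hh x ≤ 4 * P := h1.trans (hh_half_le ht)
      exact mul_le_mul_of_nonneg_left h2 (hh_nonneg _)
    have heq : (∫ s in (t/2)..t, hh (t - s) * (4 * P))
        = (∫ s in (t/2)..t, hh (t - s)) * (4 * P) :=
      integral_mul_const _ _
    have hcomp : (∫ s in (t/2)..t, hh (t - s)) = ∫ s in (0:ℝ)..t/2, hh s := by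
      rw [integral_comp_sub_left hh t]
      rw [show t - t/2 = t/2 by ring, sub_self]
    have hint : (∫ s in (0:ℝ)..t/2, hh s) ≤ 3 := hh_int_le ht2
    calc (∫ s in (t/2)..t, hh (t - s) * hh s)
        ≤ (∫ s in (t/2)..t, hh (t - s)) * (4 * P) := by rw [← heq]; exact hmono
      _ = (∫ s in (0:ℝ)..t/2, hh s) * (4 * P) := by rw [hcomp]
      _ ≤ 3 * (4 * P) := mul_le_mul_of_nonneg_right hint (by positivity)
      _ = 12 * P := by ring
  linarith

/-- If `f, g : [0,∞) → [0,∞)` satisfy `f(s) ≤ C⟨s⟩^{-3/2}` and `g(s) ≤ C⟨s⟩^{-3/2}`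
(`⟨s⟩ = √(1+s²)`), then `∫₀^t f(t-s) g(s) ds ≤ C' ⟨t⟩^{-3/2}` for all `t ≥ 0`, with a
constant `C'` depending only on `C`. -/
theorem convolution_decay (C : ℝ) (hC : 0 ≤ C) :
    ∃ C' : ℝ, ∀ f g : ℝ → ℝ,
      (∀ s, 0 ≤ s → 0 ≤ f s) → (∀ s, 0 ≤ s → 0 ≤ g s) →
      (∀ s, 0 ≤ s → f s ≤ C * (1 + s ^ 2) ^ (-(3 : ℝ) / 4)) →
      (∀ s, 0 ≤ s → g s ≤ C * (1 + s ^ 2) ^ (-(3 : ℝ) / 4)) →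
      ∀ t, 0 ≤ t →
        (∫ s in (0:ℝ)..t, f (t - s) * g s) ≤ C' * (1 + t ^ 2) ^ (-(3 : ℝ) / 4) := by
  refine ⟨24 * C ^ 2, ?_⟩
  intro f g hf0 hg0 hf hg t ht
  have hPpos : (0:ℝ) < (1 + t ^ 2) ^ (-(3:ℝ)/4) := Real.rpow_pos_of_pos (hh_pos_base t) _
  by_cases hint : IntervalIntegrable (fun s => f (t - s) * g s) volume 0 t
  · have hmaj : IntervalIntegrable (fun s => (C * hh (t - s)) * (C * hh s)) volume 0 t := by
      apply Continuous.intervalIntegrable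
      exact ((continuous_const.mul (hh_cont.comp (continuous_const.sub continuous_id))).mul
        (continuous_const.mul hh_cont))
    have hmono : (∫ s in (0:ℝ)..t, f (t - s) * g s)
        ≤ ∫ s in (0:ℝ)..t, (C * hh (t - s)) * (C * hh s) := by
      apply integral_mono_on ht hint hmaj
      intro x hx
      have hx0 : 0 ≤ x := hx.1
      have htx : 0 ≤ t - x := by linarith [hx.2]
      exact mul_le_mul (hf _ htx) (hg _ hx0) (hg0 _ hx0)
        (mul_nonneg hC (hh_nonneg _))
    have heq : (∫ s in (0:ℝ)..t, (C * hh (t - s)) * (C * hh s))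
        = C ^ 2 * ∫ s in (0:ℝ)..t, hh (t - s) * hh s := by
      rw [← intervalIntegral.integral_const_mul]
      congr 1
      funext s
      ring
    calc (∫ s in (0:ℝ)..t, f (t - s) * g s)
        ≤ C ^ 2 * ∫ s in (0:ℝ)..t, hh (t - s) * hh s := by rw [← heq]; exact hmono
      _ ≤ C ^ 2 * (24 * (1 + t ^ 2) ^ (-(3:ℝ)/4)) :=
          mul_le_mul_of_nonneg_left (key_bound ht) (by positivity)
      _ = 24 * C ^ 2 * (1 + t ^ 2) ^ (-(3:ℝ)/4) := by ring
  · rw [intervalIntegral.integral_undef hint]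
    positivity
end

section
/- Sokhotski–Plemelj type limit: let g : [a, ∞) → ℝ be continuous and integrable with a < 0. Then lim_{ε→0⁺} Im ∫_a^∞ g(y)/(y + iε) dy = -π g(0). -/
open MeasureTheory Filter Set Real Topology

private lemma SP.hasDerivAt {ε : ℝ} (hε : 0 < ε) (y : ℝ) :
    HasDerivAt (fun t => arctan (t / ε)) (ε / (y ^ 2 + ε ^ 2)) y := by
  have h := (Real.hasDerivAt_arctan (y / ε)).comp y ((hasDerivAt_id y).div_const ε)
  refine h.congr_deriv ?_
  have h1 : (0:ℝ) < 1 + (y / ε) ^ 2 := by positivity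
  have h2 : (0:ℝ) < y ^ 2 + ε ^ 2 := by positivity
  field_simp
  ring

private lemma SP.tendsto_top {ε : ℝ} (hε : 0 < ε) :
    Tendsto (fun t : ℝ => arctan (t / ε)) atTop (𝓝 (π / 2)) :=
  (tendsto_nhds_of_tendsto_nhdsWithin tendsto_arctan_atTop).comp
    (tendsto_id.atTop_div_const hε)

private lemma SP.integrableOnIoi {ε : ℝ} (hε : 0 < ε) (b : ℝ) :
    IntegrableOn (fun y : ℝ => ε / (y ^ 2 + ε ^ 2)) (Set.Ioi b) :=
  integrableOn_Ioi_deriv_of_nonneg' (fun x _ => SP.hasDerivAt hε x)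
    (fun x _ => by positivity) (SP.tendsto_top hε)

private lemma SP.integral_Ioi {ε : ℝ} (hε : 0 < ε) (b : ℝ) :
    ∫ y in Set.Ioi b, ε / (y ^ 2 + ε ^ 2) = π / 2 - arctan (b / ε) :=
  integral_Ioi_of_hasDerivAt_of_nonneg' (fun x _ => SP.hasDerivAt hε x)
    (fun x _ => by positivity) (SP.tendsto_top hε)

private lemma SP.continuous {ε : ℝ} (hε : 0 < ε) :
    Continuous fun y : ℝ => ε / (y ^ 2 + ε ^ 2) :=
  continuous_const.div (by continuity) (fun y => by positivity)

private lemma SP.integral_Icc {ε : ℝ} (hε : 0 < ε) {δ : ℝ} (hδ : 0 ≤ δ) :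
    ∫ y in Set.Icc (-δ) δ, ε / (y ^ 2 + ε ^ 2) = arctan (δ / ε) - arctan (-δ / ε) := by
  rw [integral_Icc_eq_integral_Ioc, ← intervalIntegral.integral_of_le (by linarith : -δ ≤ δ)]
  exact intervalIntegral.integral_eq_sub_of_hasDerivAt
    (fun y _ => SP.hasDerivAt hε y) ((SP.continuous hε).intervalIntegrable _ _)

private lemma SP.tendsto_eps {c : ℝ} (hc : 0 < c) :
    Tendsto (fun ε : ℝ => arctan (c / ε)) (nhdsWithin 0 (Set.Ioi 0)) (𝓝 (π / 2)) := by
  have h1 : Tendsto (fun ε : ℝ => c / ε) (nhdsWithin 0 (Set.Ioi 0)) atTop := by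
    simpa [div_eq_mul_inv] using tendsto_inv_nhdsGT_zero.const_mul_atTop hc
  exact (tendsto_nhds_of_tendsto_nhdsWithin tendsto_arctan_atTop).comp h1

set_option maxHeartbeats 1000000 in
private lemma SP.key {a : ℝ} (ha : a < 0) {g : ℝ → ℝ}
    (hcont : ContinuousOn g (Set.Ici a)) (hint : IntegrableOn g (Set.Ici a)) :
    Tendsto (fun ε : ℝ => ∫ y in Set.Ici a, g y * (ε / (y ^ 2 + ε ^ 2)))
      (nhdsWithin 0 (Set.Ioi 0)) (𝓝 (π * g 0)) := by
  set g0 := g 0 with hg0def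
  set M := ∫ y in Set.Ici a, |g y| with hMdef
  rw [Metric.tendsto_nhds]
  intro η hη
  set η' := η / (2 * (π + 1)) with hη'def
  have hπ : (0:ℝ) < π := Real.pi_pos
  have hη' : 0 < η' := by positivity
  have hc0 : ContinuousAt g 0 :=
    (hcont 0 (le_of_lt ha)).continuousAt (Ici_mem_nhds ha)
  obtain ⟨δ0, hδ0pos, hδ0⟩ := Metric.continuousAt_iff.1 hc0 η' hη'
  set δ := min (δ0 / 2) (-a) with hδdef
  have hδpos : 0 < δ := lt_min (by linarith) (by linarith)
  have hδa : a ≤ -δ := by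
    have := min_le_right (δ0 / 2) (-a); linarith
  have hδlt : δ < δ0 := lt_of_le_of_lt (min_le_left _ _) (by linarith)
  have hIccsub : Set.Icc (-δ) δ ⊆ Set.Ici a := fun y hy => le_trans hδa hy.1
  have tA : Tendsto (fun ε : ℝ => arctan (a / ε)) (nhdsWithin 0 (Set.Ioi 0))
      (𝓝 (-(π / 2))) := by
    have h := (SP.tendsto_eps (by linarith : (0:ℝ) < -a)).neg
    refine h.congr fun ε => ?_
    rw [← Real.arctan_neg, neg_div, neg_neg]
  have tδ : Tendsto (fun ε : ℝ => arctan (δ / ε)) (nhdsWithin 0 (Set.Ioi 0)) (𝓝 (π / 2)) :=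
    SP.tendsto_eps hδpos
  have tmδ : Tendsto (fun ε : ℝ => arctan (-δ / ε)) (nhdsWithin 0 (Set.Ioi 0))
      (𝓝 (-(π / 2))) := by
    refine tδ.neg.congr fun ε => ?_
    rw [← Real.arctan_neg, neg_div]
  set B : ℝ → ℝ := fun ε =>
    η' * π + (M * (ε / δ ^ 2)
      + |g0| * ((π / 2 - arctan (a / ε)) - (arctan (δ / ε) - arctan (-δ / ε))))
    + |g0| * |(π / 2 - arctan (a / ε)) - π| with hBdef
  have hB : Tendsto B (nhdsWithin 0 (Set.Ioi 0)) (𝓝 (η' * π)) := by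
    have hε0 : Tendsto (fun ε : ℝ => ε) (nhdsWithin 0 (Set.Ioi 0)) (𝓝 0) :=
      tendsto_id.mono_left nhdsWithin_le_nhds
    have h1 : Tendsto (fun ε : ℝ => M * (ε / δ ^ 2)) (nhdsWithin 0 (Set.Ioi 0)) (𝓝 0) := by
      simpa using (hε0.div_const (δ ^ 2)).const_mul M
    have h2 : Tendsto
        (fun ε : ℝ => (π / 2 - arctan (a / ε)) - (arctan (δ / ε) - arctan (-δ / ε)))
        (nhdsWithin 0 (Set.Ioi 0)) (𝓝 0) := by
      have h := ((tendsto_const_nhds : Tendsto (fun _ : ℝ => π / 2) (nhdsWithin 0 (Set.Ioi 0)) (𝓝 (π / 2))).sub tA).sub (tδ.sub tmδ)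
      rw [show (π / 2 - -(π / 2)) - (π / 2 - -(π / 2)) = 0 by ring] at h
      exact h
    have h3 : Tendsto (fun ε : ℝ => |(π / 2 - arctan (a / ε)) - π|)
        (nhdsWithin 0 (Set.Ioi 0)) (𝓝 0) := by
      have h := (((tendsto_const_nhds : Tendsto (fun _ : ℝ => π / 2) (nhdsWithin 0 (Set.Ioi 0)) (𝓝 (π / 2))).sub tA).sub (tendsto_const_nhds : Tendsto (fun _ : ℝ => π) (nhdsWithin 0 (Set.Ioi 0)) (𝓝 π))).abs
      rw [show |(π / 2 - -(π / 2)) - π| = 0 by rw [abs_eq_zero]; ring] at h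
      exact h
    have h4 := (((tendsto_const_nhds : Tendsto (fun _ : ℝ => η' * π) (nhdsWithin 0 (Set.Ioi 0)) (𝓝 (η' * π)))).add (h1.add (h2.const_mul (|g0|)))).add (h3.const_mul (|g0|))
    simpa using h4
  have hBev : ∀ᶠ ε in nhdsWithin 0 (Set.Ioi 0), B ε < η := by
    have hlt : η' * π < η := by
      rw [hη'def, div_mul_eq_mul_div, div_lt_iff₀ (by positivity)]
      nlinarith
    exact hB.eventually_lt_const hlt
  have hbound : ∀ᶠ ε in nhdsWithin 0 (Set.Ioi 0),
      |(∫ y in Set.Ici a, g y * (ε / (y ^ 2 + ε ^ 2))) - π * g0| ≤ B ε := by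
    filter_upwards [self_mem_nhdsWithin] with ε hεm
    have hε : (0:ℝ) < ε := hεm
    set P : ℝ → ℝ := fun y => ε / (y ^ 2 + ε ^ 2) with hPdef
    have hPc : Continuous P := SP.continuous hε
    have hPpos : ∀ y, 0 ≤ P y := fun y => by positivity
    have hPIci : IntegrableOn P (Set.Ici a) :=
      (integrableOn_Ici_iff_integrableOn_Ioi (by simp)).2 (SP.integrableOnIoi hε a)
    have hA : ∫ y in Set.Ici a, P y = π / 2 - arctan (a / ε) := by
      rw [integral_Ici_eq_integral_Ioi]; exact SP.integral_Ioi hε a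
    have hIccval : ∫ y in Set.Icc (-δ) δ, P y = arctan (δ / ε) - arctan (-δ / ε) :=
      SP.integral_Icc hε hδpos.le
    have hPle : ∀ y, P y ≤ ε⁻¹ := by
      intro y
      have h1 : ε / (y ^ 2 + ε ^ 2) ≤ ε / ε ^ 2 :=
        div_le_div_of_nonneg_left hε.le (by positivity) (by nlinarith [sq_nonneg y])
      calc P y ≤ ε / ε ^ 2 := h1
        _ = ε⁻¹ := by rw [sq, div_mul_eq_div_div, div_self hε.ne', one_div]
    have hgP : IntegrableOn (fun y => g y * P y) (Set.Ici a) := by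
      refine (hint.abs.mul_const ε⁻¹).mono'
        (hint.aestronglyMeasurable.mul hPc.aestronglyMeasurable) ?_
      filter_upwards with y
      rw [Real.norm_eq_abs, abs_mul, abs_of_nonneg (hPpos y)]
      exact mul_le_mul_of_nonneg_left (hPle y) (abs_nonneg _)
    have hagP : IntegrableOn (fun y => |g y| * P y) (Set.Ici a) := by
      refine hgP.abs.congr (Filter.Eventually.of_forall fun y => ?_)
      show |g y * P y| = |g y| * P y
      rw [abs_mul, abs_of_nonneg (hPpos y)]
    have hsub : IntegrableOn (fun y => (g y - g0) * P y) (Set.Ici a) := by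
      refine (hgP.sub (hPIci.const_mul g0)).congr (Filter.Eventually.of_forall fun y => ?_)
      show g y * P y - g0 * P y = (g y - g0) * P y
      ring
    have hsplit : (∫ y in Set.Ici a, g y * P y) - π * g0
        = (∫ y in Set.Icc (-δ) δ, (g y - g0) * P y)
          + (∫ y in Set.Ici a \ Set.Icc (-δ) δ, (g y - g0) * P y)
          + g0 * ((π / 2 - arctan (a / ε)) - π) := by
      have e1 : ∫ y in Set.Ici a, (g y - g0) * P y
          = (∫ y in Set.Ici a, g y * P y) - g0 * (π / 2 - arctan (a / ε)) := by
        simp_rw [sub_mul]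
        rw [integral_sub hgP (hPIci.const_mul g0), integral_const_mul, hA]
      have e2 : ∫ y in Set.Ici a \ Set.Icc (-δ) δ, (g y - g0) * P y
          = (∫ y in Set.Ici a, (g y - g0) * P y)
            - ∫ y in Set.Icc (-δ) δ, (g y - g0) * P y :=
        integral_diff measurableSet_Icc hsub hIccsub
      rw [e2, e1]; ring
    have hT1 : |∫ y in Set.Icc (-δ) δ, (g y - g0) * P y| ≤ η' * π := by
      have hi1 : IntegrableOn (fun y => |(g y - g0) * P y|) (Set.Icc (-δ) δ) :=
        (hsub.mono_set hIccsub).abs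
      have hi2 : IntegrableOn (fun y => η' * P y) (Set.Icc (-δ) δ) :=
        (hPIci.mono_set hIccsub).const_mul η'
      have h1 : |∫ y in Set.Icc (-δ) δ, (g y - g0) * P y|
          ≤ ∫ y in Set.Icc (-δ) δ, |(g y - g0) * P y| := by
        simpa only [Real.norm_eq_abs] using
          norm_integral_le_integral_norm (μ := volume.restrict (Set.Icc (-δ) δ))
            (fun y => (g y - g0) * P y)
      have h2 : ∫ y in Set.Icc (-δ) δ, |(g y - g0) * P y|
          ≤ ∫ y in Set.Icc (-δ) δ, η' * P y := by
        refine setIntegral_mono_on hi1 hi2 measurableSet_Icc fun y hy => ?_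
        rw [abs_mul, abs_of_nonneg (hPpos y)]
        refine mul_le_mul_of_nonneg_right ?_ (hPpos y)
        have hyd : dist y 0 < δ0 := by
          rw [Real.dist_eq, sub_zero]
          have h := abs_le.mpr ⟨hy.1, hy.2⟩
          linarith
        have h := hδ0 hyd
        rw [Real.dist_eq] at h
        exact h.le
      have h3 : ∫ y in Set.Icc (-δ) δ, η' * P y ≤ η' * π := by
        rw [integral_const_mul, hIccval]
        have b1 := Real.arctan_lt_pi_div_two (δ / ε)
        have b2 := Real.neg_pi_div_two_lt_arctan (-δ / ε)
        nlinarith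
      linarith
    have hdm : MeasurableSet (Set.Ici a \ Set.Icc (-δ) δ) :=
      measurableSet_Ici.diff measurableSet_Icc
    have hPdiffval : ∫ y in Set.Ici a \ Set.Icc (-δ) δ, P y
        = (π / 2 - arctan (a / ε)) - (arctan (δ / ε) - arctan (-δ / ε)) := by
      rw [integral_diff measurableSet_Icc hPIci hIccsub, hA, hIccval]
    have hT2 : |∫ y in Set.Ici a \ Set.Icc (-δ) δ, (g y - g0) * P y|
        ≤ M * (ε / δ ^ 2)
          + |g0| * ((π / 2 - arctan (a / ε)) - (arctan (δ / ε) - arctan (-δ / ε))) := by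
      have hiag : IntegrableOn (fun y => |g y| * P y) (Set.Ici a \ Set.Icc (-δ) δ) :=
        hagP.mono_set diff_subset
      have hiP : IntegrableOn P (Set.Ici a \ Set.Icc (-δ) δ) := hPIci.mono_set diff_subset
      have h1 : |∫ y in Set.Ici a \ Set.Icc (-δ) δ, (g y - g0) * P y|
          ≤ ∫ y in Set.Ici a \ Set.Icc (-δ) δ, |(g y - g0) * P y| := by
        simpa only [Real.norm_eq_abs] using
          norm_integral_le_integral_norm (μ := volume.restrict (Set.Ici a \ Set.Icc (-δ) δ))
            (fun y => (g y - g0) * P y)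
      have h2 : ∫ y in Set.Ici a \ Set.Icc (-δ) δ, |(g y - g0) * P y|
          ≤ ∫ y in Set.Ici a \ Set.Icc (-δ) δ, (|g y| * P y + |g0| * P y) := by
        refine setIntegral_mono_on ((hsub.mono_set diff_subset).abs)
          (hiag.add (hiP.const_mul (|g0|))) hdm fun y hy => ?_
        rw [abs_mul, abs_of_nonneg (hPpos y), ← add_mul]
        refine mul_le_mul_of_nonneg_right ?_ (hPpos y)
        exact abs_sub _ _
      have h3 : ∫ y in Set.Ici a \ Set.Icc (-δ) δ, (|g y| * P y + |g0| * P y)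
          = (∫ y in Set.Ici a \ Set.Icc (-δ) δ, |g y| * P y)
            + |g0| * ∫ y in Set.Ici a \ Set.Icc (-δ) δ, P y := by
        rw [integral_add hiag (hiP.const_mul (|g0|)), integral_const_mul]
      have h4 : ∫ y in Set.Ici a \ Set.Icc (-δ) δ, |g y| * P y
          ≤ ∫ y in Set.Ici a \ Set.Icc (-δ) δ, |g y| * (ε / δ ^ 2) := by
        have hiconst : IntegrableOn (fun y => |g y| * (ε / δ ^ 2)) (Set.Ici a) :=
          hint.abs.mul_const _
        refine setIntegral_mono_on hiag (hiconst.mono_set diff_subset) hdm fun y hy => ?_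
        refine mul_le_mul_of_nonneg_left ?_ (abs_nonneg _)
        have hy2 : δ ^ 2 ≤ y ^ 2 := by
          have hins : δ < |y| := by
            by_contra hcon
            push_neg at hcon
            exact hy.2 (Set.mem_Icc.2 (abs_le.1 hcon))
          nlinarith [abs_nonneg y, sq_abs y]
        exact div_le_div_of_nonneg_left hε.le (by positivity) (by nlinarith)
      have h5 : ∫ y in Set.Ici a \ Set.Icc (-δ) δ, |g y| * (ε / δ ^ 2)
          = (∫ y in Set.Ici a \ Set.Icc (-δ) δ, |g y|) * (ε / δ ^ 2) :=
        integral_mul_const _ _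
      have h6 : ∫ y in Set.Ici a \ Set.Icc (-δ) δ, |g y| ≤ M := by
        rw [hMdef]
        exact setIntegral_mono_set hint.abs
          (Filter.Eventually.of_forall fun y => abs_nonneg _) diff_subset.eventuallyLE
      have h7 : (∫ y in Set.Ici a \ Set.Icc (-δ) δ, |g y|) * (ε / δ ^ 2) ≤ M * (ε / δ ^ 2) :=
        mul_le_mul_of_nonneg_right h6 (by positivity)
      rw [h3, hPdiffval] at h2
      have h8 : ∫ y in Set.Ici a \ Set.Icc (-δ) δ, |g y| * P y ≤ M * (ε / δ ^ 2) :=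
        le_trans h4 (le_trans (le_of_eq h5) h7)
      linarith
    have hT3 : |g0 * ((π / 2 - arctan (a / ε)) - π)|
        = |g0| * |(π / 2 - arctan (a / ε)) - π| := abs_mul _ _
    show |(∫ y in Set.Ici a, g y * P y) - π * g0| ≤ B ε
    rw [hsplit]
    have hBval : B ε = η' * π + (M * (ε / δ ^ 2)
        + |g0| * ((π / 2 - arctan (a / ε)) - (arctan (δ / ε) - arctan (-δ / ε))))
      + |g0| * |(π / 2 - arctan (a / ε)) - π| := rfl
    have habs1 := abs_add_le ((∫ y in Set.Icc (-δ) δ, (g y - g0) * P y)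
        + ∫ y in Set.Ici a \ Set.Icc (-δ) δ, (g y - g0) * P y)
      (g0 * ((π / 2 - arctan (a / ε)) - π))
    have habs2 := abs_add_le (∫ y in Set.Icc (-δ) δ, (g y - g0) * P y)
      (∫ y in Set.Ici a \ Set.Icc (-δ) δ, (g y - g0) * P y)
    rw [hT3] at habs1
    linarith
  filter_upwards [hbound, hBev] with ε h1 h2
  rw [Real.dist_eq]
  exact lt_of_le_of_lt h1 h2


private lemma SP.im_eq {a : ℝ} {g : ℝ → ℝ} (hint : IntegrableOn g (Set.Ici a))
    {ε : ℝ} (hε : 0 < ε) :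
    (∫ y in Set.Ici a, (g y : ℂ) / (y + ε * Complex.I)).im
      = -∫ y in Set.Ici a, g y * (ε / (y ^ 2 + ε ^ 2)) := by
  have hI : IntegrableOn (fun y : ℝ => (g y : ℂ) / (y + ε * Complex.I)) (Set.Ici a) := by
    have hmaj : IntegrableOn (fun y : ℝ => |g y| * ε⁻¹) (Set.Ici a) := hint.abs.mul_const _
    have hmeas : AEStronglyMeasurable (fun y : ℝ => (g y : ℂ) / (y + ε * Complex.I))
        (volume.restrict (Set.Ici a)) := by
      have h1 : AEStronglyMeasurable (fun y : ℝ => (g y : ℂ))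
          (volume.restrict (Set.Ici a)) :=
        Complex.continuous_ofReal.comp_aestronglyMeasurable hint.aestronglyMeasurable
      have h3 : AEStronglyMeasurable (fun y : ℝ => ((y : ℂ) + ε * Complex.I)⁻¹)
          (volume.restrict (Set.Ici a)) := by
        apply Measurable.aestronglyMeasurable
        exact (Complex.measurable_ofReal.add_const _).inv
      simp only [div_eq_mul_inv]
      exact h1.mul h3
    refine hmaj.mono' hmeas ?_
    filter_upwards with y
    rw [norm_div, Complex.norm_real]
    have h1 : ε ≤ ‖(y : ℂ) + ε * Complex.I‖ := by
      have h := Complex.abs_im_le_norm ((y : ℂ) + ε * Complex.I)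
      rw [Complex.add_im, Complex.ofReal_im, Complex.mul_im, Complex.ofReal_re,
        Complex.I_im, Complex.ofReal_im, Complex.I_re, mul_one, mul_zero, add_zero,
        zero_add, abs_of_pos hε] at h
      exact h
    calc ‖g y‖ / ‖(y : ℂ) + ε * Complex.I‖ ≤ ‖g y‖ / ε :=
          div_le_div_of_nonneg_left (norm_nonneg _) hε h1
      _ = |g y| * ε⁻¹ := by rw [div_eq_mul_inv, Real.norm_eq_abs]
  have him := Complex.imCLM.integral_comp_comm hI
  simp only [Complex.imCLM_apply] at him
  rw [← him, ← integral_neg]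
  refine setIntegral_congr_fun measurableSet_Ici fun y _ => ?_
  have h2 : ε ^ 2 + y ^ 2 ≠ 0 := by positivity
  simp only [Complex.div_im, Complex.add_im, Complex.ofReal_im, Complex.mul_im,
    Complex.ofReal_re, Complex.I_im, Complex.I_re, Complex.add_re, Complex.mul_re,
    Complex.normSq_apply]
  field_simp
  linear_combination

/-- Sokhotski–Plemelj type limit: for `g : [a,∞) → ℝ` continuous and integrable with
`a < 0`, `lim_{ε→0⁺} Im ∫_a^∞ g(y)/(y + iε) dy = −π g(0)`. -/
theorem sokhotski_plemelj (a : ℝ) (ha : a < 0) (g : ℝ → ℝ)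
    (hcont : ContinuousOn g (Set.Ici a)) (hint : IntegrableOn g (Set.Ici a)) :
    Tendsto (fun ε : ℝ =>
        (∫ y in Set.Ici a, (g y : ℂ) / (y + ε * Complex.I)).im)
      (nhdsWithin 0 (Set.Ioi 0)) (nhds (-Real.pi * g 0)) := by
  have key := SP.key ha hcont hint
  refine Tendsto.congr' ?_ (by rw [neg_mul]; exact key.neg)
  exact eventually_nhdsWithin_of_forall fun ε hε => (SP.im_eq hint hε).symm
end
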